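/- For k ≥ 1 and positive integers r_1, ..., r_k, the number of sequences over a k-letter alphabet consisting of exactly r_i blocks of letter i (for each i) with no two adjacent blocks of the same letter equals F(r) = ∑_{p_1=1}^{r_1} ... ∑_{p_k=1}^{r_k} (-1)^{∑_i (r_i - p_i)} * C(r_1 - 1, p_1 - 1) * ... * C(r_k - 1, p_k - 1) * (p_1 + ... + p_k)! / (p_1! ... p_k!). -/

import Mathlib

open Finset List

namespace Stmt10

variable {k : ℕ}

/-- the set of all lists over `Fin k` of length `n` -/
def allLists (k : ℕ) : ℕ → Finset (List (Fin k))
  | 0 => {[]}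
  | n + 1 => (Finset.univ ×ˢ allLists k n).image fun x => x.1 :: x.2

lemma mem_allLists : ∀ {n : ℕ} {l : List (Fin k)}, l ∈ allLists k n ↔ l.length = n
  | 0, l => by simp [allLists, List.length_eq_zero_iff]
  | n + 1, l => by
    simp only [allLists, Finset.mem_image, Finset.mem_product, Finset.mem_univ, true_and,
      Prod.exists]
    constructor
    · rintro ⟨a, t, ht, rfl⟩
      simp [mem_allLists.mp ht]
    · intro h
      cases l with
      | nil => simp at h
      | cons a t => exact ⟨a, t, mem_allLists.mpr (by simpa using h), rfl⟩

lemma sum_count_eq_length (l : List (Fin k)) : ∑ i, l.count i = l.length := by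
  induction l with
  | nil => simp
  | cons a t ih =>
    simp only [List.count_cons, List.length_cons, ← ih]
    rw [Finset.sum_add_distrib]
    simp

/-- words with prescribed letter counts -/
def words (r : Fin k → ℕ) : Finset (List (Fin k)) :=
  (allLists k (∑ i, r i)).filter fun l => ∀ i, l.count i = r i

lemma mem_words {r : Fin k → ℕ} {l : List (Fin k)} :
    l ∈ words r ↔ ∀ i, l.count i = r i := by
  simp only [words, Finset.mem_filter, mem_allLists, and_iff_right_iff_imp]
  intro h
  rw [← sum_count_eq_length]
  exact Finset.sum_congr rfl fun i _ => h i

instance (l : List (Fin k)) : Decidable (l.Chain' (· ≠ ·)) :=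
  inferInstanceAs (Decidable (l.IsChain (· ≠ ·)))

/-- Smirnov words with prescribed letter counts -/
def smir (p : Fin k → ℕ) : Finset (List (Fin k)) :=
  (allLists k (∑ i, p i)).filter fun l => (∀ i, l.count i = p i) ∧ l.Chain' (· ≠ ·)

lemma mem_smir {p : Fin k → ℕ} {l : List (Fin k)} :
    l ∈ smir p ↔ (∀ i, l.count i = p i) ∧ l.Chain' (· ≠ ·) := by
  simp only [smir, Finset.mem_filter, mem_allLists, and_iff_right_iff_imp]
  rintro ⟨h, -⟩
  rw [← sum_count_eq_length]
  exact Finset.sum_congr rfl fun i _ => h i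

/-- number of compositions of `r` into `c` positive parts -/
def compCount (r c : ℕ) : ℕ :=
  if c = 0 then (if r = 0 then 1 else 0) else if r = 0 then 0 else (r - 1).choose (c - 1)

lemma compCount_zero_right (r : ℕ) : compCount r 0 = if r = 0 then 1 else 0 := rfl

lemma compCount_of_pos {r c : ℕ} (hr : 0 < r) (hc : 0 < c) :
    compCount r c = (r - 1).choose (c - 1) := by
  simp [compCount, hr.ne', hc.ne']

lemma compCount_zero_left {c : ℕ} (hc : 0 < c) : compCount 0 c = 0 := by
  simp [compCount, hc.ne']

lemma compCount_rec (R c : ℕ) :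
    compCount R (c + 1) = ∑ s ∈ Finset.Icc 1 R, compCount (R - s) c := by
  induction R with
  | zero => simp [compCount]
  | succ R ih =>
    have key : ∀ (M : ℕ) (f : ℕ → ℕ), ∑ s ∈ Finset.Icc 1 M, f s = ∑ i ∈ Finset.range M, f (1 + i) := by
      intro M f
      rw [← Finset.Ico_add_one_right_eq_Icc, Finset.sum_Ico_eq_sum_range]
      simp
    rw [key]
    rw [Finset.sum_range_succ']
    have h1 : ∀ i ∈ Finset.range R, compCount (R + 1 - (1 + (i + 1))) c
        = compCount (R - (1 + i)) c := by
      intro i _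
      congr 1
      omega
    rw [Finset.sum_congr rfl h1]
    have h2 : ∑ i ∈ Finset.range R, compCount (R - (1 + i)) c
        = ∑ s ∈ Finset.Icc 1 R, compCount (R - s) c := by
      rw [key]
    rw [h2, ← ih]
    have h3 : R + 1 - (1 + 0) = R := by omega
    rw [h3]
    -- goal: compCount (R+1) (c+1) = compCount R (c+1) + compCount R c
    rcases Nat.eq_zero_or_pos R with rfl | hR
    · rcases Nat.eq_zero_or_pos c with rfl | hc
      · simp [compCount]
      · simp [compCount, Nat.choose_eq_zero_of_lt (by omega : (0:ℕ) < c), hc.ne']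
    · rcases Nat.eq_zero_or_pos c with rfl | hc
      · simp [compCount, hR.ne']
      · rw [compCount_of_pos (by omega) (by omega), compCount_of_pos hR (by omega),
          compCount_of_pos hR hc]
        simp only [Nat.add_sub_cancel]
        obtain ⟨c', rfl⟩ : ∃ c', c = c' + 1 := ⟨c - 1, by omega⟩
        have hR' : R = (R - 1) + 1 := by omega
        rw [hR', Nat.choose_succ_succ']
        simp [Nat.add_comm]

end Stmt10

namespace Stmt10

variable {k : ℕ}

lemma destutter'_head? (l : List (Fin k)) (a : Fin k) :
    (l.destutter' (· ≠ ·) a).head? = some a := by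
  induction l generalizing a with
  | nil => simp [List.destutter'_nil]
  | cons b t ih =>
    by_cases h : a ≠ b
    · rw [List.destutter'_cons_pos _ h]
      simp
    · rw [List.destutter'_cons_neg _ h]
      exact ih a

lemma destutter_head? {w : List (Fin k)} {a : Fin k} {t : List (Fin k)}
    (h : w.destutter (· ≠ ·) = a :: t) : w.head? = some a := by
  cases w with
  | nil => simp [List.destutter_nil] at h
  | cons x l =>
    rw [List.destutter_cons'] at h
    have := destutter'_head? l x
    rw [h] at this
    simp only [List.head?_cons] at this ⊢
    exact this.symm ▸ rfl

lemma destutter'_replicate_append (a : Fin k) (v : List (Fin k)) :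
    ∀ s : ℕ, (List.replicate s a ++ v).destutter' (· ≠ ·) a = v.destutter' (· ≠ ·) a
  | 0 => rfl
  | s + 1 => by
    rw [List.replicate_succ, List.cons_append, List.destutter'_cons_neg _ (by simp)]
    exact destutter'_replicate_append a v s

lemma destutter'_eq_cons {a : Fin k} {v : List (Fin k)} (h : ∀ x ∈ v.head?, x ≠ a) :
    v.destutter' (· ≠ ·) a = a :: v.destutter (· ≠ ·) := by
  cases v with
  | nil => simp [List.destutter'_nil, List.destutter_nil]
  | cons c t =>
    have hac : a ≠ c := (h c (by simp)).symm
    rw [List.destutter'_cons_pos _ hac, List.destutter_cons']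

lemma destutter_replicate_append {a : Fin k} {v : List (Fin k)} {s : ℕ} (hs : 0 < s)
    (h : ∀ x ∈ v.head?, x ≠ a) :
    (List.replicate s a ++ v).destutter (· ≠ ·) = a :: v.destutter (· ≠ ·) := by
  obtain ⟨s', rfl⟩ : ∃ s', s = s' + 1 := ⟨s - 1, by omega⟩
  rw [List.replicate_succ, List.cons_append, List.destutter_cons',
    destutter'_replicate_append, destutter'_eq_cons h]

lemma takeWhile_replicate_append {a : Fin k} {v : List (Fin k)}
    (h : ∀ x ∈ v.head?, x ≠ a) :
    ∀ s : ℕ, (List.replicate s a ++ v).takeWhile (· == a) = List.replicate s a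
  | 0 => by
    cases v with
    | nil => rfl
    | cons c t =>
      have : c ≠ a := h c (by simp)
      simp only [List.replicate_zero, List.nil_append, List.replicate]
      rw [List.takeWhile_cons_of_neg]
      simpa using this
  | s + 1 => by
    rw [List.replicate_succ, List.cons_append, List.takeWhile_cons_of_pos (by simp),
      takeWhile_replicate_append h s]

lemma head?_dropWhile_ne (p : Fin k → Bool) :
    ∀ (l : List (Fin k)) {x : Fin k}, (l.dropWhile p).head? = some x → p x = false := by
  intro l
  induction l with
  | nil => simp
  | cons c t ih =>
    intro x hx
    by_cases h : p c
    · rw [List.dropWhile_cons_of_pos h] at hx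
      exact ih hx
    · rw [List.dropWhile_cons_of_neg h] at hx
      simp only [List.head?_cons, Option.some.injEq] at hx
      subst hx
      simpa using h

end Stmt10

namespace Stmt10

variable {k : ℕ}

lemma fiber_card : ∀ (b : List (Fin k)), b.Chain' (· ≠ ·) → ∀ r : Fin k → ℕ,
    ((words r).filter fun w => w.destutter (· ≠ ·) = b).card
      = ∏ i, compCount (r i) (b.count i) := by
  intro b
  induction b with
  | nil =>
    intro _ r
    simp only [List.count_nil, compCount_zero_right]
    by_cases hr : ∀ i, r i = 0
    · have : ((words r).filter fun w => w.destutter (· ≠ ·) = []) = {[]} := by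
        ext l
        simp only [Finset.mem_filter, mem_words, List.destutter_eq_nil, Finset.mem_singleton]
        constructor
        · rintro ⟨-, h⟩; exact h
        · rintro rfl
          exact ⟨fun i => by simp [hr i], rfl⟩
      rw [this]
      simp [hr]
    · push_neg at hr
      obtain ⟨i0, hi0⟩ := hr
      have : ((words r).filter fun w => w.destutter (· ≠ ·) = []) = ∅ := by
        ext l
        simp only [Finset.mem_filter, mem_words, List.destutter_eq_nil, Finset.notMem_empty,
          iff_false, not_and]
        rintro h rfl
        exact hi0 ((h i0).symm.trans List.count_nil)
      rw [this, Finset.card_empty]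
      rw [Finset.prod_eq_zero (Finset.mem_univ i0) (by simp [hi0])]
  | cons a b' ih =>
    intro hb r
    have hb' : b'.Chain' (· ≠ ·) := (List.isChain_cons.mp hb).2
    have hhd : ∀ x ∈ b'.head?, a ≠ x := (List.isChain_cons.mp hb).1
    rw [Finset.card_eq_sum_card_fiberwise
      (f := fun w => (w.takeWhile (· == a)).length) (t := Finset.Icc 1 (r a)) ?memb]
    case memb =>
      intro w hw
      rw [Finset.mem_coe, Finset.mem_filter] at hw
      obtain ⟨hw, hd⟩ := hw
      have hhead : w.head? = some a := destutter_head? hd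
      simp only [Finset.mem_coe, Finset.mem_Icc]
      constructor
      · -- 1 ≤ length of takeWhile
        cases w with
        | nil => simp at hhead
        | cons x l =>
          simp only [List.head?_cons, Option.some.injEq] at hhead
          subst hhead
          rw [List.takeWhile_cons_of_pos (by simp)]
          simp
      · -- length takeWhile ≤ r a
        have h1 : (w.takeWhile (· == a)).count a = (w.takeWhile (· == a)).length :=
          List.count_eq_length.mpr fun x hx => by
            have := List.mem_takeWhile_imp hx
            exact (beq_iff_eq.mp this).symm
        calc (w.takeWhile (· == a)).length = (w.takeWhile (· == a)).count a := h1.symm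
          _ ≤ w.count a := ((List.takeWhile_prefix _).sublist).count_le a
          _ = r a := mem_words.mp hw a
    · -- now: sum over s of fiber cards
      have hfib : ∀ s ∈ Finset.Icc 1 (r a),
          (((words r).filter fun w => w.destutter (· ≠ ·) = a :: b').filter
              fun w => (w.takeWhile (· == a)).length = s).card
            = ∏ i, compCount (Function.update r a (r a - s) i) (b'.count i) := by
        intro s hs
        rw [Finset.mem_Icc] at hs
        rw [← ih hb' (Function.update r a (r a - s))]
        apply Finset.card_nbij' (i := fun w => w.drop s)
          (j := fun v => List.replicate s a ++ v)
        · -- hi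
          intro w hw
          simp only [Finset.mem_coe, Finset.mem_filter, mem_words] at hw ⊢
          obtain ⟨⟨hwc, hwd⟩, hws⟩ := hw
          have htw : w.takeWhile (· == a) = List.replicate s a :=
            List.eq_replicate_iff.mpr ⟨hws, fun x hx => by
              simpa using List.mem_takeWhile_imp hx⟩
          have hw2 : w = List.replicate s a ++ w.dropWhile (· == a) := by
            conv_lhs => rw [← List.takeWhile_append_dropWhile (p := (· == a)) (l := w)]
            rw [htw]
          have hdrop : w.drop s = w.dropWhile (· == a) := by
            conv_lhs => rw [hw2]
            exact List.drop_left' (by simp)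
          have hvh : ∀ x ∈ (w.dropWhile (· == a)).head?, x ≠ a := by
            intro x hx
            have := head?_dropWhile_ne _ w (by simpa using hx)
            simpa using this
          have hdest : (w.dropWhile (· == a)).destutter (· ≠ ·) = b' := by
            have := destutter_replicate_append (a := a) (v := w.dropWhile (· == a))
              (s := s) (by omega) hvh
            rw [← hw2] at this
            rw [hwd] at this
            exact ((List.cons.injEq _ _ _ _).mp this).2.symm
          rw [hdrop]
          refine ⟨fun i => ?_, hdest⟩
          have hcnt : w.count i = (if a = i then s else 0) + (w.dropWhile (· == a)).count i := by
            conv_lhs => rw [hw2]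
            rw [List.count_append, List.count_replicate]
            simp
          rw [Function.update_apply]
          by_cases hia : i = a
          · subst hia
            have h2 := hwc i
            rw [hcnt, if_pos rfl] at h2
            rw [if_pos rfl]
            omega
          · have h2 := hwc i
            rw [hcnt, if_neg (fun h => hia h.symm)] at h2
            rw [if_neg hia]
            omega
        · -- hj
          intro v hv
          simp only [Finset.mem_coe, Finset.mem_filter, mem_words] at hv ⊢
          obtain ⟨hvc, hvd⟩ := hv
          have hvh : ∀ x ∈ v.head?, x ≠ a := by
            intro x hx
            cases v with
            | nil => simp at hx
            | cons c t =>
              simp only [List.head?_cons, Option.mem_def, Option.some.injEq] at hx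
              subst hx
              have hbh : b'.head? = some c := by
                rw [← hvd, List.destutter_cons']
                exact destutter'_head? t c
              exact (hhd c (by simp [hbh])).symm
          refine ⟨⟨fun i => ?_, ?_⟩, ?_⟩
          · rw [List.count_append, List.count_replicate]
            have h2 := hvc i
            rw [Function.update_apply] at h2
            by_cases hia : i = a
            · subst hia
              rw [if_pos rfl] at h2
              rw [if_pos (by simp)]
              omega
            · rw [if_neg hia] at h2
              have hai : ¬ a = i := fun h => hia h.symm
              rw [if_neg (by simp [hai] : ¬ ((a == i) = true))]
              omega
          · rw [destutter_replicate_append (by omega) hvh, hvd]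
          · rw [takeWhile_replicate_append hvh, List.length_replicate]
        · -- left_inv
          intro w hw
          simp only [Finset.mem_coe, Finset.mem_filter, mem_words] at hw
          obtain ⟨⟨hwc, hwd⟩, hws⟩ := hw
          have htw : w.takeWhile (· == a) = List.replicate s a :=
            List.eq_replicate_iff.mpr ⟨hws, fun x hx => by
              simpa using List.mem_takeWhile_imp hx⟩
          have hw2 : w = List.replicate s a ++ w.dropWhile (· == a) := by
            conv_lhs => rw [← List.takeWhile_append_dropWhile (p := (· == a)) (l := w)]
            rw [htw]
          have hdrop : w.drop s = w.dropWhile (· == a) := by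
            conv_lhs => rw [hw2]
            exact List.drop_left' (by simp)
          simp only [hdrop]
          exact hw2.symm
        · -- right_inv
          intro v hv
          exact List.drop_left' (by simp)
      rw [Finset.sum_congr rfl hfib]
      have hsplit : ∀ s : ℕ, ∏ i, compCount (Function.update r a (r a - s) i) (b'.count i)
          = compCount (r a - s) (b'.count a)
            * ∏ i ∈ Finset.univ.erase a, compCount (r i) (b'.count i) := by
        intro s
        rw [← Finset.mul_prod_erase Finset.univ _ (Finset.mem_univ a)]
        simp only [Function.update_self]
        congr 1
        exact Finset.prod_congr rfl fun i hi => by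
          rw [Function.update_of_ne (Finset.ne_of_mem_erase hi)]
      rw [Finset.sum_congr rfl fun s _ => hsplit s]
      rw [← Finset.sum_mul, ← compCount_rec]
      rw [← Finset.mul_prod_erase Finset.univ _ (Finset.mem_univ a)]
      congr 1
      · congr 1
        rw [List.count_cons]
        simp
      · exact Finset.prod_congr rfl fun i hi => by
          rw [List.count_cons]
          have hai : ¬ a = i := fun h => Finset.ne_of_mem_erase hi h.symm
          have h3 : (a == i) = false := by simp [hai]
          rw [h3]
          simp

end Stmt10

namespace Stmt10

variable {k : ℕ}

lemma multinomial_rec {r : Fin k → ℕ} {m : ℕ} (hm : ∑ i, r i = m + 1) :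
    Nat.multinomial Finset.univ r
      = ∑ a ∈ Finset.univ.filter fun a => 0 < r a,
          Nat.multinomial Finset.univ (Function.update r a (r a - 1)) := by
  have hP : 0 < ∏ i, Nat.factorial (r i) := Finset.prod_pos fun i _ => Nat.factorial_pos _
  apply Nat.eq_of_mul_eq_mul_left hP
  rw [Nat.multinomial_spec, hm, Finset.mul_sum]
  have hterm : ∀ a ∈ Finset.univ.filter fun a => 0 < r a,
      (∏ i, Nat.factorial (r i)) * Nat.multinomial Finset.univ (Function.update r a (r a - 1))
        = r a * Nat.factorial m := by
    intro a ha
    rw [Finset.mem_filter] at ha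
    have hra : 0 < r a := ha.2
    have hsum : ∑ i, Function.update r a (r a - 1) i = m := by
      rw [Finset.sum_update_of_mem (Finset.mem_univ a), ← Finset.erase_eq]
      have h2 : r a + ∑ i ∈ Finset.univ.erase a, r i = m + 1 := by
        rw [Finset.add_sum_erase _ _ (Finset.mem_univ a), hm]
      omega
    have hprod : (∏ i, Nat.factorial (r i))
        = r a * ∏ i, Nat.factorial (Function.update r a (r a - 1) i) := by
      rw [← Finset.mul_prod_erase Finset.univ (fun i => Nat.factorial (r i)) (Finset.mem_univ a),
        ← Finset.mul_prod_erase Finset.univ (fun i => Nat.factorial (Function.update r a (r a - 1) i))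
          (Finset.mem_univ a)]
      rw [Function.update_self, ← Nat.mul_factorial_pred hra.ne', mul_assoc]
      congr 1
      congr 1
      exact Finset.prod_congr rfl fun i hi => by
        rw [Function.update_of_ne (Finset.ne_of_mem_erase hi)]
    rw [hprod, mul_assoc, Nat.multinomial_spec, hsum]
  rw [Finset.sum_congr rfl hterm]
  have : ∑ a ∈ Finset.univ.filter fun a => 0 < r a, r a * Nat.factorial m = ∑ a, r a * Nat.factorial m := by
    apply Finset.sum_subset (Finset.filter_subset _ _)
    intro a _ ha
    simp only [Finset.mem_filter, Finset.mem_univ, true_and, not_lt, Nat.le_zero] at ha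
    simp [ha]
  rw [this, ← Finset.sum_mul, hm, Nat.factorial_succ]

lemma words_card : ∀ (n : ℕ) (r : Fin k → ℕ), ∑ i, r i = n →
    (words r).card = Nat.multinomial Finset.univ r := by
  intro n
  induction n using Nat.strong_induction_on with
  | _ n IH =>
    intro r hr
    cases n with
    | zero =>
      have h0 : ∀ i, r i = 0 := by
        intro i
        have := Finset.sum_eq_zero_iff.mp hr
        exact this i (Finset.mem_univ i)
      have hW : words r = {[]} := by
        ext l
        simp only [mem_words, Finset.mem_singleton]
        constructor
        · intro h
          rw [← List.length_eq_zero_iff, ← sum_count_eq_length]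
          simp only [h, h0]
          simp
        · rintro rfl i
          simp [h0]
      have hM : Nat.multinomial Finset.univ r = 1 := by
        have := Nat.multinomial_spec Finset.univ r
        simp only [h0] at this
        simpa using this
      rw [hW, hM, Finset.card_singleton]
    | succ m =>
      have hk : k ≠ 0 := by
        rintro rfl
        simp at hr
      haveI : Inhabited (Fin k) := ⟨⟨0, Nat.pos_of_ne_zero hk⟩⟩
      have hlen : ∀ l ∈ words r, l ≠ [] := by
        intro l hl hnil
        rw [mem_words] at hl
        have : (l : List (Fin k)).length = m + 1 := by
          rw [← sum_count_eq_length, ← hr]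
          exact Finset.sum_congr rfl fun i _ => hl i
        rw [hnil] at this
        simp at this
      rw [Finset.card_eq_sum_card_fiberwise
        (f := fun l => l.headI) (t := Finset.univ.filter fun a => 0 < r a) ?hmemb]
      case hmemb =>
        intro l hl
        simp only [Finset.mem_coe, Finset.mem_filter, Finset.mem_univ, true_and]
        rw [← mem_words.mp hl l.headI, List.count_pos_iff]
        have := hlen l hl
        cases l with
        | nil => exact absurd rfl this
        | cons x t => exact List.mem_cons_self
      · have hfib : ∀ a ∈ Finset.univ.filter fun a => 0 < r a,
            ((words r).filter fun l => l.headI = a).card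
              = (words (Function.update r a (r a - 1))).card := by
          intro a ha
          rw [Finset.mem_filter] at ha
          apply Finset.card_nbij' (i := fun l => l.tail) (j := fun v => a :: v)
          · intro l hl
            rw [Finset.mem_coe, Finset.mem_filter] at hl
            obtain ⟨hl, hhead⟩ := hl
            have hne := hlen l hl
            rw [mem_words] at hl; rw [Finset.mem_coe, mem_words]
            cases l with
            | nil => exact absurd rfl hne
            | cons x t =>
              have hx : x = a := hhead
              subst hx
              intro i
              have h2 := hl i
              rw [List.count_cons] at h2
              rw [Function.update_apply]
              simp only [List.tail_cons]
              by_cases hia : i = x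
              · subst hia
                rw [if_pos rfl]
                rw [if_pos (by simp)] at h2
                omega
              · have hxi : ¬ x = i := fun h => hia h.symm
                rw [if_neg hia]
                rw [if_neg (by simp [hxi] : ¬ ((x == i) = true))] at h2
                omega
          · intro v hv
            rw [Finset.mem_coe, mem_words] at hv
            rw [Finset.mem_coe, Finset.mem_filter]
            refine ⟨mem_words.mpr fun i => ?_, rfl⟩
            rw [List.count_cons]
            have h2 := hv i
            rw [Function.update_apply] at h2
            by_cases hia : i = a
            · subst hia
              rw [if_pos rfl] at h2
              rw [if_pos (by simp)]
              omega
            · have hai : ¬ a = i := fun h => hia h.symm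
              rw [if_neg hia] at h2
              rw [if_neg (by simp [hai] : ¬ ((a == i) = true))]
              omega
          · intro l hl
            rw [Finset.mem_coe, Finset.mem_filter] at hl
            have hne := hlen l hl.1
            cases l with
            | nil => exact absurd rfl hne
            | cons x t =>
              have : x = a := hl.2
              subst this
              rfl
          · intro v _
            rfl
        rw [Finset.sum_congr rfl hfib]
        rw [multinomial_rec hr]
        apply Finset.sum_congr rfl
        intro a ha
        rw [Finset.mem_filter] at ha
        apply IH m (Nat.lt_succ_self m)
        rw [Finset.sum_update_of_mem (Finset.mem_univ a), ← Finset.erase_eq]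
        have h2 : r a + ∑ i ∈ Finset.univ.erase a, r i = m + 1 := by
          rw [Finset.add_sum_erase _ _ (Finset.mem_univ a), hr]
        have := ha.2
        omega

end Stmt10

namespace Stmt10

variable {k : ℕ}

lemma words_card_eq_sum_smir {r : Fin k → ℕ} (hr : ∀ i, 0 < r i) :
    (words r).card
      = ∑ p ∈ Fintype.piFinset fun i => Finset.Icc 1 (r i),
          (∏ i, (r i - 1).choose (p i - 1)) * (smir p).card := by
  rw [Finset.card_eq_sum_card_fiberwise
    (f := fun w => (⟨fun i => (w.destutter (· ≠ ·)).count i, w.destutter (· ≠ ·)⟩ :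
      Σ _ : Fin k → ℕ, List (Fin k)))
    (t := (Fintype.piFinset fun i => Finset.range (r i + 1)).sigma fun p => smir p) ?memb]
  case memb =>
    intro w hw
    rw [Finset.mem_coe, Finset.mem_sigma]
    constructor
    · rw [Fintype.mem_piFinset]
      intro i
      rw [Finset.mem_range, Nat.lt_succ_iff, ← mem_words.mp hw i]
      exact (List.destutter_sublist (R := (· ≠ ·)) w).count_le i
    · exact mem_smir.mpr ⟨fun i => rfl, List.isChain_destutter (R := (· ≠ ·)) w⟩
  rw [Finset.sum_sigma]
  have hfib : ∀ p ∈ Fintype.piFinset fun i => Finset.range (r i + 1), ∀ b ∈ smir p,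
      ((words r).filter fun w =>
          (⟨fun i => (w.destutter (· ≠ ·)).count i, w.destutter (· ≠ ·)⟩ :
            Σ _ : Fin k → ℕ, List (Fin k)) = ⟨p, b⟩).card
        = ∏ i, compCount (r i) (p i) := by
    intro p _ b hb
    obtain ⟨hbc, hbch⟩ := mem_smir.mp hb
    have heqpred : ∀ w : List (Fin k),
        ((⟨fun i => (w.destutter (· ≠ ·)).count i, w.destutter (· ≠ ·)⟩ :
            Σ _ : Fin k → ℕ, List (Fin k)) = ⟨p, b⟩) ↔ w.destutter (· ≠ ·) = b := by
      intro w
      rw [Sigma.mk.inj_iff, heq_eq_eq]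
      constructor
      · rintro ⟨-, h⟩; exact h
      · rintro rfl
        exact ⟨funext fun i => hbc i, rfl⟩
    rw [Finset.filter_congr fun w _ => heqpred w, fiber_card b hbch r]
    exact Finset.prod_congr rfl fun i _ => by rw [hbc i]
  calc ∑ p ∈ Fintype.piFinset fun i => Finset.range (r i + 1), ∑ b ∈ smir p,
        ((words r).filter fun w =>
          (⟨fun i => (w.destutter (· ≠ ·)).count i, w.destutter (· ≠ ·)⟩ :
            Σ _ : Fin k → ℕ, List (Fin k)) = ⟨p, b⟩).card
      = ∑ p ∈ Fintype.piFinset fun i => Finset.range (r i + 1),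
          (∏ i, compCount (r i) (p i)) * (smir p).card := by
        apply Finset.sum_congr rfl
        intro p hp
        rw [Finset.sum_congr rfl (hfib p hp), Finset.sum_const, smul_eq_mul, mul_comm]
    _ = ∑ p ∈ Fintype.piFinset fun i => Finset.Icc 1 (r i),
          (∏ i, compCount (r i) (p i)) * (smir p).card := by
        symm
        apply Finset.sum_subset
        · intro p hp
          rw [Fintype.mem_piFinset] at hp ⊢
          intro i
          have := hp i
          rw [Finset.mem_Icc] at this
          rw [Finset.mem_range]
          omega
        · intro p hp hp'
          have : ∃ i, p i = 0 := by
            by_contra hc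
            push_neg at hc
            apply hp'
            rw [Fintype.mem_piFinset] at hp ⊢
            intro i
            have h1 := hp i
            rw [Finset.mem_range] at h1
            rw [Finset.mem_Icc]
            have := hc i
            omega
          obtain ⟨i0, hi0⟩ := this
          rw [Finset.prod_eq_zero (Finset.mem_univ i0)
            (by rw [hi0, compCount_zero_right, if_neg (hr i0).ne']), zero_mul]
    _ = ∑ p ∈ Fintype.piFinset fun i => Finset.Icc 1 (r i),
          (∏ i, (r i - 1).choose (p i - 1)) * (smir p).card := by
        apply Finset.sum_congr rfl
        intro p hp
        rw [Fintype.mem_piFinset] at hp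
        congr 1
        apply Finset.prod_congr rfl
        intro i _
        have := hp i
        rw [Finset.mem_Icc] at this
        exact compCount_of_pos (hr i) (by omega)

end Stmt10

namespace Stmt10

lemma sum_Icc_one (M : ℕ) (f : ℕ → ℤ) :
    ∑ s ∈ Finset.Icc 1 M, f s = ∑ i ∈ Finset.range M, f (1 + i) := by
  rw [← Finset.Ico_add_one_right_eq_Icc, Finset.sum_Ico_eq_sum_range]
  simp

lemma neg_one_pow_sub {N m : ℕ} (h : m ≤ N) :
    (-1 : ℤ) ^ (N - m) = (-1) ^ N * (-1) ^ m := by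
  have h1 : (-1 : ℤ) ^ m * (-1) ^ m = 1 := by
    rw [← pow_add]
    exact Even.neg_one_pow ⟨m, rfl⟩
  calc (-1 : ℤ) ^ (N - m) = (-1) ^ (N - m) * ((-1) ^ m * (-1) ^ m) := by rw [h1, mul_one]
    _ = ((-1) ^ (N - m) * (-1) ^ m) * (-1) ^ m := by ring
    _ = (-1) ^ N * (-1) ^ m := by rw [← pow_add, Nat.sub_add_cancel h]

lemma delta_sum {q r : ℕ} (hq : 1 ≤ q) (hqr : q ≤ r) :
    ∑ p ∈ Finset.Icc 1 r,
        (-1 : ℤ) ^ (r - p) * ((r - 1).choose (p - 1) : ℤ) * ((p - 1).choose (q - 1) : ℤ)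
      = if q = r then 1 else 0 := by
  have hr : 1 ≤ r := le_trans hq hqr
  set R := r - 1 with hR
  set Q := q - 1 with hQ
  have hrR : r = R + 1 := by omega
  have hQR : Q ≤ R := by omega
  rw [sum_Icc_one]
  rw [Finset.sum_congr rfl (fun j (hj : j ∈ Finset.range r) => by
    have h1 : r - (1 + j) = R - j := by omega
    have h2 : 1 + j - 1 = j := by omega
    rw [h1, h2] :
    ∀ j ∈ Finset.range r,
      (-1 : ℤ) ^ (r - (1 + j)) * ((R).choose (1 + j - 1) : ℤ)
          * ((1 + j - 1).choose Q : ℤ)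
        = (-1 : ℤ) ^ (R - j) * (R.choose j : ℤ) * ((j).choose Q : ℤ))]
  have hrange : Finset.range r = Finset.range (R + 1) := by rw [hrR]
  rw [hrange]
  -- restrict to Icc Q R
  have hsub : ∑ j ∈ Finset.range (R + 1), (-1 : ℤ) ^ (R - j) * (R.choose j : ℤ) * ((j).choose Q : ℤ)
      = ∑ j ∈ Finset.Icc Q R, (-1 : ℤ) ^ (R - j) * (R.choose j : ℤ) * ((j).choose Q : ℤ) := by
    symm
    apply Finset.sum_subset
    · intro j hj
      rw [Finset.mem_Icc] at hj
      rw [Finset.mem_range]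
      omega
    · intro j hj hj'
      rw [Finset.mem_range] at hj
      rw [Finset.mem_Icc] at hj'
      have : j < Q := by omega
      rw [Nat.choose_eq_zero_of_lt this]
      simp
  rw [hsub]
  -- reindex Icc Q R
  have hreind : ∑ j ∈ Finset.Icc Q R, (-1 : ℤ) ^ (R - j) * (R.choose j : ℤ) * ((j).choose Q : ℤ)
      = ∑ m ∈ Finset.range (R - Q + 1),
          (-1 : ℤ) ^ (R - (Q + m)) * (R.choose (Q + m) : ℤ) * ((Q + m).choose Q : ℤ) := by
    rw [← Finset.Ico_add_one_right_eq_Icc, Finset.sum_Ico_eq_sum_range]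
    apply Finset.sum_congr
    · congr 1
      omega
    · intro m _
      rfl
  rw [hreind]
  set N := R - Q with hN
  have hstep2 : ∀ m ∈ Finset.range (N + 1),
      (-1 : ℤ) ^ (R - (Q + m)) * (R.choose (Q + m) : ℤ) * ((Q + m).choose Q : ℤ)
        = ((R.choose Q : ℤ) * (-1) ^ N) * ((-1) ^ m * (N.choose m : ℤ)) := by
    intro m hm
    rw [Finset.mem_range] at hm
    have hmN : m ≤ N := by omega
    have hchoose : R.choose (Q + m) * (Q + m).choose Q = R.choose Q * N.choose m := by
      have := Nat.choose_mul (n := R) (k := Q + m) (s := Q) (by omega)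
      simpa [hN, Nat.add_sub_cancel_left] using this
    have hsign : (R : ℕ) - (Q + m) = N - m := by omega
    rw [hsign, neg_one_pow_sub hmN]
    have : (R.choose (Q + m) : ℤ) * ((Q + m).choose Q : ℤ) = (R.choose Q : ℤ) * (N.choose m : ℤ) := by
      exact_mod_cast congrArg (Nat.cast : ℕ → ℤ) hchoose
    linear_combination ((-1:ℤ)^N * (-1)^m) * this
  rw [Finset.sum_congr rfl hstep2, ← Finset.mul_sum, Int.alternating_sum_range_choose]
  by_cases hqr' : q = r
  · have hNQ : N = 0 := by omega
    have hRQ : Q = R := by omega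
    rw [if_pos hqr', hNQ, hRQ]
    simp
  · have hNQ : N ≠ 0 := by omega
    rw [if_neg hqr', if_neg hNQ]
    simp

end Stmt10

namespace Stmt10

variable {k : ℕ}

lemma smir_card_eq {r : Fin k → ℕ} (hr : ∀ i, 0 < r i) :
    ((smir r).card : ℤ)
      = ∑ p ∈ Fintype.piFinset fun i => Finset.Icc 1 (r i),
          (-1 : ℤ) ^ (∑ i, (r i - p i)) * (∏ i, ((r i - 1).choose (p i - 1) : ℤ)) *
            (Nat.multinomial Finset.univ p : ℤ) := by
  have hp1 : ∀ p : Fin k → ℕ, p ∈ (Fintype.piFinset fun i => Finset.Icc 1 (r i)) →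
      (∀ i, 1 ≤ p i) ∧ (∀ i, p i ≤ r i) := by
    intro p hp
    rw [Fintype.mem_piFinset] at hp
    constructor <;> intro i <;> have := hp i <;> rw [Finset.mem_Icc] at this <;> omega
  have step1 : ∑ p ∈ Fintype.piFinset fun i => Finset.Icc 1 (r i),
        (-1 : ℤ) ^ (∑ i, (r i - p i)) * (∏ i, ((r i - 1).choose (p i - 1) : ℤ)) *
          (Nat.multinomial Finset.univ p : ℤ)
      = ∑ p ∈ Fintype.piFinset fun i => Finset.Icc 1 (r i),
        (-1 : ℤ) ^ (∑ i, (r i - p i)) * (∏ i, ((r i - 1).choose (p i - 1) : ℤ)) *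
          ∑ q ∈ Fintype.piFinset fun i => Finset.Icc 1 (p i),
            (∏ i, ((p i - 1).choose (q i - 1) : ℤ)) * ((smir q).card : ℤ) := by
    apply Finset.sum_congr rfl
    intro p hp
    congr 1
    rw [← words_card _ p rfl, words_card_eq_sum_smir (fun i => (hp1 p hp).1 i)]
    push_cast
    rfl
  have step2 : ∀ p ∈ Fintype.piFinset fun i => Finset.Icc 1 (r i),
      (∑ q ∈ Fintype.piFinset fun i => Finset.Icc 1 (p i),
        (∏ i, ((p i - 1).choose (q i - 1) : ℤ)) * ((smir q).card : ℤ))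
      = ∑ q ∈ Fintype.piFinset fun i => Finset.Icc 1 (r i),
        (∏ i, ((p i - 1).choose (q i - 1) : ℤ)) * ((smir q).card : ℤ) := by
    intro p hp
    apply Finset.sum_subset
    · intro q hq
      rw [Fintype.mem_piFinset] at hq ⊢
      intro i
      have h1 := hq i
      rw [Finset.mem_Icc] at h1 ⊢
      exact ⟨h1.1, h1.2.trans ((hp1 p hp).2 i)⟩
    · intro q hq hq'
      have hex : ∃ i, p i < q i := by
        by_contra hc
        push_neg at hc
        apply hq'
        rw [Fintype.mem_piFinset] at hq ⊢
        intro i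
        have h1 := hq i
        rw [Finset.mem_Icc] at h1 ⊢
        exact ⟨h1.1, hc i⟩
      obtain ⟨i0, hi0⟩ := hex
      have hq1 : 1 ≤ q i0 := by
        rw [Fintype.mem_piFinset] at hq
        have := hq i0
        rw [Finset.mem_Icc] at this
        exact this.1
      have hp0 : 1 ≤ p i0 := (hp1 p hp).1 i0
      have hlt : p i0 - 1 < q i0 - 1 := by clear * - hi0 hq1 hp0; omega
      have hzn : (p i0 - 1).choose (q i0 - 1) = 0 :=
        Nat.choose_eq_zero_of_lt hlt
      have hz : (((p i0 - 1).choose (q i0 - 1) : ℕ) : ℤ) = 0 := by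
        rw [hzn]
        rfl
      rw [Finset.prod_eq_zero (Finset.mem_univ i0) hz, zero_mul]
  have step3 : ∑ p ∈ Fintype.piFinset fun i => Finset.Icc 1 (r i),
        (-1 : ℤ) ^ (∑ i, (r i - p i)) * (∏ i, ((r i - 1).choose (p i - 1) : ℤ)) *
          ∑ q ∈ Fintype.piFinset fun i => Finset.Icc 1 (r i),
            (∏ i, ((p i - 1).choose (q i - 1) : ℤ)) * ((smir q).card : ℤ)
      = ∑ q ∈ Fintype.piFinset fun i => Finset.Icc 1 (r i),
          (∑ p ∈ Fintype.piFinset fun i => Finset.Icc 1 (r i),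
            (-1 : ℤ) ^ (∑ i, (r i - p i)) * (∏ i, ((r i - 1).choose (p i - 1) : ℤ)) *
              (∏ i, ((p i - 1).choose (q i - 1) : ℤ))) * ((smir q).card : ℤ) := by
    simp_rw [Finset.mul_sum, Finset.sum_mul]
    rw [Finset.sum_comm]
    apply Finset.sum_congr rfl
    intro q _
    apply Finset.sum_congr rfl
    intro p _
    ring
  have step4 : ∀ q ∈ Fintype.piFinset fun i => Finset.Icc 1 (r i),
      (∑ p ∈ Fintype.piFinset fun i => Finset.Icc 1 (r i),
          (-1 : ℤ) ^ (∑ i, (r i - p i)) * (∏ i, ((r i - 1).choose (p i - 1) : ℤ)) *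
            (∏ i, ((p i - 1).choose (q i - 1) : ℤ)))
        = if q = r then (1 : ℤ) else 0 := by
    intro q hq
    have hqq := hp1 q hq
    have hfact : ∀ p ∈ Fintype.piFinset fun i => Finset.Icc 1 (r i),
        (-1 : ℤ) ^ (∑ i, (r i - p i)) * (∏ i, ((r i - 1).choose (p i - 1) : ℤ)) *
            (∏ i, ((p i - 1).choose (q i - 1) : ℤ))
          = ∏ i, ((-1 : ℤ) ^ (r i - p i) * ((r i - 1).choose (p i - 1) : ℤ) *
              ((p i - 1).choose (q i - 1) : ℤ)) := by
      intro p _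
      rw [← Finset.prod_pow_eq_pow_sum, ← Finset.prod_mul_distrib, ← Finset.prod_mul_distrib]
    rw [Finset.sum_congr rfl hfact]
    have hps := Finset.prod_univ_sum (fun i => Finset.Icc 1 (r i))
      (fun i x => (-1 : ℤ) ^ (r i - x) * ((r i - 1).choose (x - 1) : ℤ) *
        ((x - 1).choose (q i - 1) : ℤ))
    rw [← hps]
    have hdelta : ∀ i : Fin k,
        (∑ x ∈ Finset.Icc 1 (r i), (-1 : ℤ) ^ (r i - x) * ((r i - 1).choose (x - 1) : ℤ) *
          ((x - 1).choose (q i - 1) : ℤ)) = if q i = r i then 1 else 0 :=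
      fun i => delta_sum (hqq.1 i) (hqq.2 i)
    rw [Finset.prod_congr rfl fun i _ => hdelta i]
    by_cases hqr : q = r
    · subst hqr
      rw [if_pos rfl]
      apply Finset.prod_eq_one
      intro i _
      rw [if_pos rfl]
    · rw [if_neg hqr]
      have hex : ∃ i, q i ≠ r i := by
        by_contra hc
        push_neg at hc
        exact hqr (funext hc)
      obtain ⟨i0, hi0⟩ := hex
      exact Finset.prod_eq_zero (Finset.mem_univ i0) (if_neg hi0)
  have step5 : ∑ q ∈ Fintype.piFinset fun i => Finset.Icc 1 (r i),
        (if q = r then (1 : ℤ) else 0) * ((smir q).card : ℤ) = ((smir r).card : ℤ) := by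
    rw [Finset.sum_eq_single_of_mem r]
    · rw [if_pos rfl, one_mul]
    · rw [Fintype.mem_piFinset]
      intro i
      rw [Finset.mem_Icc]
      exact ⟨hr i, le_refl _⟩
    · intro q _ hqr
      rw [if_neg hqr, zero_mul]
  rw [← step5]
  symm
  rw [step1, Finset.sum_congr rfl (fun p hp => by rw [step2 p hp]), step3]
  apply Finset.sum_congr rfl
  intro q hq
  rw [step4 q hq]

end Stmt10

/-- For `k ≥ 1` and positive integers `r 0, …, r (k-1)`, the number of words over a
`k`-letter alphabet with exactly `r i` occurrences of letter `i` and no two adjacent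
letters equal (i.e. valid interleavings of `r i` blocks of each letter `i`) equals
`∑_{p_i=1}^{r_i} (-1)^{∑ (r_i - p_i)} ∏_i C(r_i - 1, p_i - 1) · (∑ p_i)! / ∏ p_i!`. -/
theorem stmt_10 (k : ℕ) (hk : 0 < k) (r : Fin k → ℕ) (hr : ∀ i, 0 < r i) :
    (Fintype.card {w : List.Vector (Fin k) (∑ i, r i) //
        (∀ i, w.toList.count i = r i) ∧ w.toList.IsChain (· ≠ ·)} : ℤ) =
      ∑ p ∈ Fintype.piFinset fun i => Finset.Icc 1 (r i),
        (-1 : ℤ) ^ (∑ i, (r i - p i)) *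
          (∏ i, ((r i - 1).choose (p i - 1) : ℤ)) *
          (Nat.multinomial Finset.univ p : ℤ) := by
  have e : {w : List.Vector (Fin k) (∑ i, r i) //
      (∀ i, w.toList.count i = r i) ∧ w.toList.IsChain (· ≠ ·)} ≃ {l // l ∈ Stmt10.smir r} :=
    { toFun := fun w => ⟨w.1.toList, Stmt10.mem_smir.mpr w.2⟩
      invFun := fun l => ⟨⟨l.1, Stmt10.mem_allLists.mp (Finset.mem_filter.mp l.2).1⟩,
        Stmt10.mem_smir.mp l.2⟩
      left_inv := fun w => Subtype.ext (Subtype.ext rfl)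
      right_inv := fun l => Subtype.ext rfl }
  have h1 : Fintype.card {w : List.Vector (Fin k) (∑ i, r i) //
      (∀ i, w.toList.count i = r i) ∧ w.toList.IsChain (· ≠ ·)} = (Stmt10.smir r).card := by
    rw [Fintype.card_congr e, Fintype.card_coe]
  rw [h1]
  exact Stmt10.smir_card_eq hr
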